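/- The Bell-number-like sequence b_n with EGF exp((1/2)exp(2x) + exp(x) - 3/2) (the k=1 case, i.e., the partition category / OEIS A002872) satisfies b_n = sum_{m=0}^{n} (sum_{i=m}^{n} S(n,i) C(i,m)) * cd'(m), where cd'(m) = sum_i m!/(i!(m-2i)! 2^i) is the involution number cd(m). -/

import Mathlib

/-- Stirling numbers of the second kind. -/
def stirling2 : ℕ → ℕ → ℕ
  | 0, 0 => 1
  | 0, _ + 1 => 0
  | _ + 1, 0 => 0
  | n + 1, k + 1 => (k + 1) * stirling2 n (k + 1) + stirling2 n k

/-- `cd m` is the number of involutions in the symmetric group on `m` letters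
(OEIS A000085); it equals `∑_i m!/(i!(m-2i)!2^i)`. -/
noncomputable def cd (m : ℕ) : ℕ :=
  Nat.card {g : Equiv.Perm (Fin m) // g ^ 2 = 1}

/-- The formal exponential `exp ∘ g` of a formal power series `g` (with zero constant
coefficient), defined coefficientwise. -/
noncomputable def expComp (g : PowerSeries ℚ) : PowerSeries ℚ :=
  PowerSeries.mk fun n =>
    ∑ k ∈ Finset.range (n + 1), ((k.factorial : ℚ))⁻¹ * PowerSeries.coeff (R := ℚ) n (g ^ k)



open Equiv Equiv.Perm

noncomputable def icount (α : Type*) : ℕ := Nat.card {g : Equiv.Perm α // g ^ 2 = 1}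

lemma permCongr_sq {α β : Type*} (e : α ≃ β) (g : Perm α) :
    (e.permCongr g) ^ 2 = e.permCongr (g ^ 2) := by
  rw [sq, sq, Perm.mul_def, Perm.mul_def, permCongr_trans]

lemma permCongr_one {α β : Type*} (e : α ≃ β) : e.permCongr 1 = 1 := by
  rw [Perm.one_def, permCongr_refl, Perm.one_def]

lemma icount_congr {α β : Type*} (e : α ≃ β) : icount α = icount β :=
  Nat.card_congr <| (e.permCongr).subtypeEquiv fun g => by
    rw [permCongr_sq]
    constructor
    · intro h; rw [h, permCongr_one]
    · intro h
      have := congrArg (e.permCongr.symm) h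
      rwa [Equiv.symm_apply_apply, permCongr_symm, permCongr_one] at this

lemma cd_eq_icount {α : Type*} {n : ℕ} (e : α ≃ Fin n) : icount α = cd n :=
  icount_congr e

lemma optionCongr_mul {α : Type*} (p q : Perm α) :
    (p * q).optionCongr = p.optionCongr * q.optionCongr := by
  rw [Perm.mul_def, Perm.mul_def, Equiv.optionCongr_trans]

lemma optionCongr_sq {α : Type*} (p : Perm α) :
    p.optionCongr ^ 2 = (p ^ 2).optionCongr := by
  rw [sq, sq, optionCongr_mul]

/-- Counting involutions fixing a point. -/
lemma icount_fix {α : Type*} [DecidableEq α] (a : α) :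
    Nat.card {p : Perm α // p a = a ∧ p ^ 2 = 1} = icount {x : α // x ≠ a} := by
  have h₁ : ∀ (p : Perm α), p a = a → ∀ x : α, x ≠ a ↔ p x ≠ a := by
    intro p hpa x
    constructor
    · intro hx h; exact hx (p.injective (h.trans hpa.symm))
    · intro h hx; exact h (hx ▸ hpa)
  refine Nat.card_congr ?_
  refine
    { toFun := fun ⟨p, hfa, hsq⟩ => ⟨p.subtypePerm (fun x => (h₁ p hfa x).symm), ?_⟩
      invFun := fun ⟨q, hq⟩ => ⟨Equiv.Perm.ofSubtype q,
        Equiv.Perm.ofSubtype_apply_of_not_mem q (by simp), by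
          rw [← map_pow, hq, map_one]⟩
      left_inv := ?_
      right_inv := ?_ }
  · rw [Equiv.Perm.subtypePerm_pow]
    ext x
    simp [hsq]
  · rintro ⟨p, hfa, hsq⟩
    exact Subtype.ext (Equiv.Perm.ofSubtype_subtypePerm _ fun x h hxa => h (hxa ▸ hfa))
  · rintro ⟨q, hq⟩
    ext x
    simp

open scoped Classical in
lemma nat_card_sigma {ι : Type*} [Fintype ι] (f : ι → Type*) [∀ i, Finite (f i)] :
    Nat.card (Σ i, f i) = ∑ i, Nat.card (f i) := by
  letI : ∀ i, Fintype (f i) := fun i => Fintype.ofFinite _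
  simp [Nat.card_eq_fintype_card, Fintype.card_sigma]

lemma decompose_none_sq {α : Type*} [DecidableEq α] (p : Perm α) :
    (Equiv.Perm.decomposeOption.symm (none, p)) ^ 2 = 1 ↔ p ^ 2 = 1 := by
  rw [Equiv.Perm.decomposeOption_symm_apply, Equiv.swap_self]
  rw [show (Equiv.refl (Option α) : Perm (Option α)) = 1 from rfl, one_mul, optionCongr_sq]
  constructor
  · intro h
    exact Equiv.optionCongr_injective (h.trans Equiv.optionCongr_one.symm)
  · intro h
    rw [h, Equiv.optionCongr_one]

lemma swap_comm_optionCongr {α : Type*} [DecidableEq α] {a : α} {p : Perm α} (hpa : p a = a) :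
    p.optionCongr * Equiv.swap (none : Option α) (some a) =
      Equiv.swap (none : Option α) (some a) * p.optionCongr := by
  ext x
  rcases x with _ | b
  · simp [Perm.mul_apply, hpa]
  · by_cases hb : b = a
    · subst hb; simp [Perm.mul_apply, hpa]
    · have h1 : p b ≠ a := fun h => hb (p.injective (h.trans hpa.symm))
      have e1 : Equiv.swap (none : Option α) (some a) (some b) = some b :=
        Equiv.swap_apply_of_ne_of_ne (by simp) (by simpa using hb)
      have e2 : Equiv.swap (none : Option α) (some a) (some (p b)) = some (p b) :=
        Equiv.swap_apply_of_ne_of_ne (by simp) (by simpa using h1)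
      simp [Perm.mul_apply, e1, e2]

lemma decompose_some_sq {α : Type*} [DecidableEq α] (a : α) (p : Perm α) :
    (Equiv.Perm.decomposeOption.symm (some a, p)) ^ 2 = 1 ↔ (p a = a ∧ p ^ 2 = 1) := by
  rw [Equiv.Perm.decomposeOption_symm_apply]
  set s : Perm (Option α) := Equiv.swap (none : Option α) (some a) with hs
  have key : ∀ hpa : p a = a, (s * p.optionCongr) ^ 2 = (p ^ 2).optionCongr := by
    intro hpa
    have : (s * p.optionCongr) ^ 2 = s * (p.optionCongr * s) * p.optionCongr := by
      rw [sq]; group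
    rw [this, swap_comm_optionCongr hpa, ← mul_assoc, ← hs, Equiv.swap_mul_self, one_mul,
      ← optionCongr_sq]
    rw [sq]
  constructor
  · intro h
    have hpa : p a = a := by
      have h1 : (s * p.optionCongr) ((s * p.optionCongr) none) = none := by
        rw [← Perm.mul_apply, ← sq, h, Perm.one_apply]
      have h2 : (s * p.optionCongr) none = some a := by
        simp [Perm.mul_apply, hs]
      rw [h2] at h1
      have h3 : (s * p.optionCongr) (some a) = s (some (p a)) := by
        simp [Perm.mul_apply]
      rw [h3] at h1
      by_contra hne
      rw [Equiv.swap_apply_of_ne_of_ne (by simp) (by simpa using hne)] at h1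
      exact absurd h1 (Option.some_ne_none _)
    refine ⟨hpa, ?_⟩
    rw [key hpa] at h
    exact Equiv.optionCongr_injective (h.trans Equiv.optionCongr_one.symm)
  · rintro ⟨hpa, hsq⟩
    rw [key hpa, hsq, Equiv.optionCongr_one]

def subtype_ne_equiv_fin (n : ℕ) (a : Fin (n + 1)) : {x : Fin (n + 1) // x ≠ a} ≃ Fin n := by
  refine (Equiv.subtypeEquiv (finSuccEquiv' a) fun x => ?_).trans
    ((Equiv.subtypeEquivRight fun y => (Option.ne_none_iff_isSome (o := y))).trans
      (Equiv.optionIsSomeEquiv (Fin n)))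
  constructor
  · intro hx h
    exact hx ((finSuccEquiv' a).injective (h.trans (finSuccEquiv'_at a).symm))
  · intro h hx
    exact h (hx ▸ finSuccEquiv'_at a)

lemma cd_zero : cd 0 = 1 := by
  have h : ∀ g : Perm (Fin 0), g = 1 := fun g => Equiv.ext fun x => x.elim0
  rw [cd, Nat.card_eq_one_iff_unique]
  exact ⟨⟨fun a b => Subtype.ext ((h a.1).trans (h b.1).symm)⟩, ⟨⟨1, one_pow 2⟩⟩⟩

lemma cd_one : cd 1 = 1 := by
  have h : ∀ g : Perm (Fin 1), g = 1 := fun g => Equiv.ext fun x => Subsingleton.elim _ _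
  rw [cd, Nat.card_eq_one_iff_unique]
  exact ⟨⟨fun a b => Subtype.ext ((h a.1).trans (h b.1).symm)⟩, ⟨⟨1, one_pow 2⟩⟩⟩

lemma cd_rec (n : ℕ) : cd (n + 2) = cd (n + 1) + (n + 1) * cd n := by
  have e0 : cd (n + 2) = icount (Option (Fin (n + 1))) :=
    (cd_eq_icount (finSuccEquiv (n + 1)).symm).symm
  rw [e0, icount]
  rw [Nat.card_congr (Equiv.subtypeEquiv
    (q := fun x : Option (Fin (n + 1)) × Perm (Fin (n + 1)) =>
      (Equiv.Perm.decomposeOption.symm x) ^ 2 = 1)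
    (Equiv.Perm.decomposeOption (α := Fin (n + 1))) fun g => by
      rw [Equiv.symm_apply_apply])]
  rw [Nat.card_congr (Equiv.subtypeProdEquivSigmaSubtype fun (o : Option (Fin (n + 1)))
    (p : Perm (Fin (n + 1))) => (Equiv.Perm.decomposeOption.symm (o, p)) ^ 2 = 1)]
  rw [nat_card_sigma]
  rw [Fintype.sum_option]
  congr 1
  · rw [Nat.card_congr (Equiv.subtypeEquivRight fun p => decompose_none_sq p)]
    exact cd_eq_icount (Equiv.refl _)
  · have hterm : ∀ a : Fin (n + 1),
        Nat.card {p : Perm (Fin (n + 1)) //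
          (Equiv.Perm.decomposeOption.symm (some a, p)) ^ 2 = 1} = cd n := by
      intro a
      rw [Nat.card_congr (Equiv.subtypeEquivRight fun p => decompose_some_sq a p)]
      rw [icount_fix a]
      exact cd_eq_icount (subtype_ne_equiv_fin n a)
    simp only [hterm]
    simp [Finset.sum_const, Finset.card_univ]

noncomputable def aseq (i : ℕ) : ℕ := ∑ m ∈ Finset.range (i + 1), Nat.choose i m * cd m

lemma cd_succ (m : ℕ) : cd (m + 1) = cd m + m * cd (m - 1) := by
  cases m with
  | zero => simp [cd_one, cd_zero]
  | succ k => exact cd_rec k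

lemma aseq_zero : aseq 0 = 1 := by simp [aseq, cd_zero]

lemma aseq_rec (i : ℕ) : aseq (i + 1) = 2 * aseq i + i * aseq (i - 1) := by
  cases i with
  | zero => simp [aseq, Finset.sum_range_succ, cd_zero, cd_one]
  | succ j =>
    have key : aseq (j + 2) = aseq (j + 1) + ((j + 1) * aseq j + aseq (j + 1)) := by
      rw [aseq, Finset.sum_range_succ']
      have h1 : ∀ m ∈ Finset.range (j + 2), Nat.choose (j + 2) (m + 1) * cd (m + 1) =
          Nat.choose (j + 1) m * cd (m + 1) + Nat.choose (j + 1) (m + 1) * cd (m + 1) := by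
        intro m _
        rw [Nat.choose_succ_succ, add_mul]
      rw [Finset.sum_congr rfl h1, Finset.sum_add_distrib]
      have h2 : ∀ m ∈ Finset.range (j + 2), Nat.choose (j + 1) m * cd (m + 1) =
          Nat.choose (j + 1) m * cd m + Nat.choose (j + 1) m * (m * cd (m - 1)) := by
        intro m _
        rw [cd_succ, Nat.mul_add]
      rw [Finset.sum_congr rfl h2, Finset.sum_add_distrib]
      have h3 : ∑ m ∈ Finset.range (j + 2), Nat.choose (j + 1) m * cd m = aseq (j + 1) := rfl
      have h4 : ∑ m ∈ Finset.range (j + 2), Nat.choose (j + 1) m * (m * cd (m - 1)) =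
          (j + 1) * aseq j := by
        rw [Finset.sum_range_succ']
        simp only [Nat.mul_zero, Nat.zero_mul, Nat.mul_zero, add_zero, Nat.add_sub_cancel]
        rw [aseq, Finset.mul_sum]
        refine Finset.sum_congr rfl fun m _ => ?_
        have := Nat.add_one_mul_choose_eq (j + 1) m  -- hopefully: (j+2)*C(j+1,m) = C(j+2,m+1)*(m+1)?
        -- we need C(j+1,m+1)*(m+1) = (j+1)*C(j,m)
        have h5 : Nat.choose (j + 1) (m + 1) * (m + 1) = (j + 1) * Nat.choose j m :=
          (Nat.add_one_mul_choose_eq j m).symm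
        calc Nat.choose (j + 1) (m + 1) * ((m + 1) * cd m)
            = Nat.choose (j + 1) (m + 1) * (m + 1) * cd m := by ring
          _ = (j + 1) * Nat.choose j m * cd m := by rw [h5]
          _ = (j + 1) * (Nat.choose j m * cd m) := by ring
      have h5 : (∑ m ∈ Finset.range (j + 2), Nat.choose (j + 1) (m + 1) * cd (m + 1)) +
          Nat.choose (j + 2) 0 * cd 0 = aseq (j + 1) := by
        have e := Finset.sum_range_succ' (fun m => Nat.choose (j + 1) m * cd m) (j + 2)
        simp only [Nat.choose_zero_right, one_mul] at e ⊢
        rw [← e, aseq, Finset.sum_range_succ]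
        simp [Nat.choose_succ_self]
      rw [h3, h4, add_assoc, h5]
      ring
    show aseq (j + 2) = 2 * aseq (j + 1) + (j + 1) * aseq (j + 1 - 1)
    simp only [Nat.add_sub_cancel]
    rw [key]
    ring


open PowerSeries

noncomputable def pcomp (c : ℕ → ℚ) (h : PowerSeries ℚ) : PowerSeries ℚ :=
  PowerSeries.mk fun n => ∑ k ∈ Finset.range (n + 1), c k * PowerSeries.coeff (R := ℚ) n (h ^ k)

lemma coeff_pcomp (c : ℕ → ℚ) (h : PowerSeries ℚ) (n : ℕ) :
    coeff (R := ℚ) n (pcomp c h) = ∑ k ∈ Finset.range (n + 1), c k * coeff (R := ℚ) n (h ^ k) := by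
  rw [pcomp, coeff_mk]

lemma coeff_pow_eq_zero {h : PowerSeries ℚ} (hh : constantCoeff (R := ℚ) h = 0)
    {k n : ℕ} (hnk : n < k) : coeff (R := ℚ) n (h ^ k) = 0 := by
  have hd : (X : PowerSeries ℚ) ^ k ∣ h ^ k :=
    pow_dvd_pow_of_dvd (X_dvd_iff.mpr hh) k
  exact (X_pow_dvd_iff.mp hd) n hnk

lemma pcomp_add (b c : ℕ → ℚ) (h : PowerSeries ℚ) :
    pcomp (fun k => b k + c k) h = pcomp b h + pcomp c h := by
  ext n
  simp [coeff_pcomp, add_mul, Finset.sum_add_distrib]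

lemma pcomp_smul (r : ℚ) (c : ℕ → ℚ) (h : PowerSeries ℚ) :
    pcomp (fun k => r * c k) h = C (R := ℚ) r * pcomp c h := by
  ext n
  simp [coeff_pcomp, coeff_C_mul, Finset.mul_sum, mul_assoc]

lemma pcomp_congr {b c : ℕ → ℚ} (h : PowerSeries ℚ) (hbc : ∀ k, b k = c k) :
    pcomp b h = pcomp c h := by
  ext n; simp [coeff_pcomp, funext hbc]

lemma mul_pcomp (c : ℕ → ℚ) (h : PowerSeries ℚ) (hh : constantCoeff (R := ℚ) h = 0) :
    pcomp (fun k => if k = 0 then 0 else c (k - 1)) h = h * pcomp c h := by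
  ext n
  rw [coeff_pcomp, PowerSeries.coeff_mul, Finset.sum_range_succ']
  simp only [Nat.succ_ne_zero, if_false, Nat.add_sub_cancel, if_pos rfl, if_true, zero_mul,
    add_zero, eq_self_iff_true]
  calc ∑ k ∈ Finset.range n, c k * (coeff (R := ℚ)) n (h ^ (k + 1))
      = ∑ k ∈ Finset.range n, ∑ p ∈ Finset.HasAntidiagonal.antidiagonal n,
          c k * (coeff (R := ℚ) p.1 h * coeff (R := ℚ) p.2 (h ^ k)) := by
        refine Finset.sum_congr rfl fun k _ => ?_
        rw [pow_succ', PowerSeries.coeff_mul, Finset.mul_sum]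
    _ = ∑ p ∈ Finset.HasAntidiagonal.antidiagonal n, ∑ k ∈ Finset.range n,
          c k * (coeff (R := ℚ) p.1 h * coeff (R := ℚ) p.2 (h ^ k)) := Finset.sum_comm
    _ = ∑ p ∈ Finset.HasAntidiagonal.antidiagonal n, coeff (R := ℚ) p.1 h * coeff (R := ℚ) p.2 (pcomp c h) := by
        refine Finset.sum_congr rfl fun p hp => ?_
        rw [coeff_pcomp, Finset.mul_sum]
        by_cases hp1 : coeff (R := ℚ) p.1 h = 0
        · simp [hp1]
        · have hp2 : p.2 + 1 ≤ n := by
            have hmem := Finset.HasAntidiagonal.mem_antidiagonal.mp hp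
            rcases Nat.eq_zero_or_pos p.1 with h0 | h0
            · exact absurd (by rw [h0, coeff_zero_eq_constantCoeff]; exact hh) hp1
            · omega
          refine (Finset.sum_subset (Finset.range_subset_range.mpr hp2) fun k _ hk => ?_).symm.trans ?_
          · rw [coeff_pow_eq_zero hh (by simpa using hk), mul_zero, mul_zero]
          · exact Finset.sum_congr rfl fun k _ => by ring

lemma derivative_pcomp (c : ℕ → ℚ) (h : PowerSeries ℚ) (hh : constantCoeff (R := ℚ) h = 0) :
    d⁄dX ℚ (pcomp c h) = pcomp (fun k => ((k : ℚ) + 1) * c (k + 1)) h * d⁄dX ℚ h := by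
  ext n
  rw [coeff_derivative, coeff_pcomp, Finset.sum_mul, Finset.sum_range_succ']
  have hzero : c 0 * coeff (R := ℚ) (n + 1) (h ^ 0) * ((n : ℚ) + 1) = 0 := by
    rw [pow_zero, PowerSeries.coeff_one, if_neg (Nat.succ_ne_zero n)]
    ring
  rw [hzero, add_zero]
  have key : ∀ k : ℕ, coeff (R := ℚ) (n + 1) (h ^ (k + 1)) * ((n : ℚ) + 1) =
      ((k : ℚ) + 1) * ∑ p ∈ Finset.HasAntidiagonal.antidiagonal n,
        coeff (R := ℚ) p.1 (h ^ k) * coeff (R := ℚ) p.2 (d⁄dX ℚ h) := by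
    intro k
    have hD : d⁄dX ℚ (h ^ (k + 1)) = (k + 1 : ℕ) • (h ^ k * d⁄dX ℚ h) := by
      have hl := Derivation.leibniz_pow (d⁄dX ℚ) (a := h) (k + 1)
      rw [Nat.add_sub_cancel] at hl
      rw [hl, smul_eq_mul]
    calc coeff (R := ℚ) (n + 1) (h ^ (k + 1)) * ((n : ℚ) + 1)
        = coeff (R := ℚ) n (d⁄dX ℚ (h ^ (k + 1))) := (coeff_derivative _ n).symm
      _ = ((k : ℚ) + 1) * coeff (R := ℚ) n (h ^ k * d⁄dX ℚ h) := by
          rw [hD, map_nsmul, nsmul_eq_mul, Nat.cast_add, Nat.cast_one]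
      _ = ((k : ℚ) + 1) * ∑ p ∈ Finset.HasAntidiagonal.antidiagonal n,
            coeff (R := ℚ) p.1 (h ^ k) * coeff (R := ℚ) p.2 (d⁄dX ℚ h) := by
          rw [PowerSeries.coeff_mul]
  rw [PowerSeries.coeff_mul]
  calc ∑ k ∈ Finset.range (n + 1), c (k + 1) * coeff (R := ℚ) (n + 1) (h ^ (k + 1)) * ((n : ℚ) + 1)
      = ∑ k ∈ Finset.range (n + 1), ∑ p ∈ Finset.HasAntidiagonal.antidiagonal n,
          (((k : ℚ) + 1) * c (k + 1)) * (coeff (R := ℚ) p.1 (h ^ k) * coeff (R := ℚ) p.2 (d⁄dX ℚ h)) := by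
        refine Finset.sum_congr rfl fun k _ => ?_
        rw [mul_assoc, key k, Finset.mul_sum, Finset.mul_sum]
        exact Finset.sum_congr rfl fun p _ => by ring
    _ = ∑ p ∈ Finset.HasAntidiagonal.antidiagonal n, ∑ k ∈ Finset.range (n + 1),
          (((k : ℚ) + 1) * c (k + 1)) * (coeff (R := ℚ) p.1 (h ^ k) * coeff (R := ℚ) p.2 (d⁄dX ℚ h)) :=
        Finset.sum_comm
    _ = ∑ p ∈ Finset.HasAntidiagonal.antidiagonal n,
          coeff (R := ℚ) p.1 (pcomp (fun k => ((k : ℚ) + 1) * c (k + 1)) h) * coeff (R := ℚ) p.2 (d⁄dX ℚ h) := by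
        refine Finset.sum_congr rfl fun p hp => ?_
        rw [coeff_pcomp, Finset.sum_mul]
        have hp1 : p.1 + 1 ≤ n + 1 := by
          have := Finset.HasAntidiagonal.mem_antidiagonal.mp hp
          omega
        refine (Finset.sum_subset (Finset.range_subset_range.mpr hp1) fun k _ hk => ?_).symm.trans ?_
        · rw [coeff_pow_eq_zero hh (by simpa using hk)]
          ring
        · exact Finset.sum_congr rfl fun k _ => by ring

lemma ode_unique {u F G : PowerSeries ℚ} (hF : d⁄dX ℚ F = u * F) (hG : d⁄dX ℚ G = u * G)
    (h0 : constantCoeff (R := ℚ) F = constantCoeff (R := ℚ) G) : F = G := by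
  ext n
  induction n using Nat.strong_induction_on with
  | _ n ih =>
    match n with
    | 0 => simpa using h0
    | Nat.succ m =>
      have hFm : coeff (R := ℚ) m (d⁄dX ℚ F) = coeff (R := ℚ) m (d⁄dX ℚ G) := by
        rw [hF, hG, PowerSeries.coeff_mul, PowerSeries.coeff_mul]
        refine Finset.sum_congr rfl fun p hp => ?_
        have hlt : p.2 < m + 1 := by
          have := Finset.HasAntidiagonal.mem_antidiagonal.mp hp; omega
        rw [ih p.2 hlt]
      rw [coeff_derivative, coeff_derivative] at hFm
      have hne : ((m : ℚ) + 1) ≠ 0 := by positivity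
      exact mul_right_cancel₀ hne hFm

noncomputable def E1 : PowerSeries ℚ := PowerSeries.mk fun n => ((n.factorial : ℚ))⁻¹

lemma coeff_E1 (n : ℕ) : coeff (R := ℚ) n E1 = ((n.factorial : ℚ))⁻¹ := coeff_mk n _

lemma constantCoeff_E1 : constantCoeff (R := ℚ) E1 = 1 := by
  rw [← coeff_zero_eq_constantCoeff, coeff_E1]
  norm_num

lemma deriv_E1 : d⁄dX ℚ E1 = E1 := by
  ext n
  rw [coeff_derivative, coeff_E1, coeff_E1, Nat.factorial_succ]
  have h1 : ((n.factorial : ℚ)) ≠ 0 := Nat.cast_ne_zero.mpr n.factorial_ne_zero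
  have h2 : ((n : ℚ) + 1) ≠ 0 := by positivity
  push_cast
  field_simp

lemma E1_sq : E1 * E1 = PowerSeries.mk fun n => (2 : ℚ) ^ n * ((n.factorial : ℚ))⁻¹ := by
  ext n
  rw [PowerSeries.coeff_mul, coeff_mk, Finset.Nat.sum_antidiagonal_eq_sum_range_succ_mk]
  have key : ∀ i ∈ Finset.range (n + 1),
      coeff (R := ℚ) i E1 * coeff (R := ℚ) (n - i) E1 = (n.choose i : ℚ) * ((n.factorial : ℚ))⁻¹ := by
    intro i hi
    have hle : i ≤ n := Nat.lt_succ_iff.mp (Finset.mem_range.mp hi)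
    rw [coeff_E1, coeff_E1]
    have hfact := Nat.choose_mul_factorial_mul_factorial hle
    have hq : (n.choose i : ℚ) * (i.factorial : ℚ) * ((n - i).factorial : ℚ) =
        (n.factorial : ℚ) := by exact_mod_cast congrArg (Nat.cast : ℕ → ℚ) hfact
    have h1 : ((i.factorial : ℚ)) ≠ 0 := Nat.cast_ne_zero.mpr (Nat.factorial_ne_zero _)
    have h2 : (((n - i).factorial : ℚ)) ≠ 0 := Nat.cast_ne_zero.mpr (Nat.factorial_ne_zero _)
    have h3 : ((n.factorial : ℚ)) ≠ 0 := Nat.cast_ne_zero.mpr (Nat.factorial_ne_zero _)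
    field_simp
    linarith [hq]
  rw [Finset.sum_congr rfl key, ← Finset.sum_mul]
  have : ∑ i ∈ Finset.range (n + 1), (n.choose i : ℚ) = (2 : ℚ) ^ n := by
    have := Nat.sum_range_choose n
    exact_mod_cast congrArg (Nat.cast : ℕ → ℚ) this
  rw [this]



lemma expComp_eq_pcomp (g : PowerSeries ℚ) :
    expComp g = pcomp (fun k => ((k.factorial : ℚ))⁻¹) g := rfl

lemma expComp_X : expComp X = E1 := by
  rw [expComp_eq_pcomp]
  ext n
  rw [coeff_pcomp, coeff_E1]
  have key : ∀ k ∈ Finset.range (n + 1),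
      ((k.factorial : ℚ))⁻¹ * coeff (R := ℚ) n ((X : PowerSeries ℚ) ^ k) =
        if n = k then ((k.factorial : ℚ))⁻¹ else 0 := by
    intro k _
    rw [coeff_X_pow]
    split_ifs <;> simp
  rw [Finset.sum_congr rfl key, Finset.sum_ite_eq (Finset.range (n + 1)) n
    (fun k => ((k.factorial : ℚ))⁻¹)]
  simp

lemma expComp_CX : expComp (C (R := ℚ) 2 * X) = PowerSeries.mk fun n =>
    (2 : ℚ) ^ n * ((n.factorial : ℚ))⁻¹ := by
  rw [expComp_eq_pcomp]
  ext n
  rw [coeff_pcomp, coeff_mk]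
  have key : ∀ k ∈ Finset.range (n + 1),
      ((k.factorial : ℚ))⁻¹ * coeff (R := ℚ) n ((C (R := ℚ) 2 * X) ^ k) =
        if n = k then (2 : ℚ) ^ k * ((k.factorial : ℚ))⁻¹ else 0 := by
    intro k _
    rw [mul_pow, ← map_pow, coeff_C_mul, coeff_X_pow]
    split_ifs <;> simp [mul_comm]
  rw [Finset.sum_congr rfl key, Finset.sum_ite_eq (Finset.range (n + 1)) n
    (fun k => (2 : ℚ) ^ k * ((k.factorial : ℚ))⁻¹)]
  simp

lemma constantCoeff_h : constantCoeff (R := ℚ) (E1 - 1) = 0 := by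
  rw [map_sub, constantCoeff_E1, map_one, sub_self]

lemma deriv_h : d⁄dX ℚ (E1 - 1) = E1 := by
  rw [map_sub, deriv_E1, Derivation.map_one_eq_zero, sub_zero]

lemma coeff_h_pow : ∀ n i : ℕ,
    (n.factorial : ℚ) * coeff (R := ℚ) n ((E1 - 1) ^ i) = (i.factorial : ℚ) * (stirling2 n i : ℚ) := by
  intro n
  induction n with
  | zero =>
    intro i
    cases i with
    | zero => simp [stirling2]
    | succ i =>
      have : coeff (R := ℚ) 0 ((E1 - 1) ^ (i + 1)) = 0 := by
        have : constantCoeff (R := ℚ) ((E1 - 1) ^ (i + 1)) = 0 := by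
          rw [map_pow, constantCoeff_h, zero_pow (Nat.succ_ne_zero i)]
        simpa using this
      rw [this]
      simp [stirling2]
  | succ n ih =>
    intro i
    cases i with
    | zero =>
      rw [pow_zero, PowerSeries.coeff_one, if_neg (Nat.succ_ne_zero n)]
      simp [stirling2]
    | succ i =>
      have hD : d⁄dX ℚ ((E1 - 1) ^ (i + 1)) = (i + 1 : ℕ) • ((E1 - 1) ^ i * E1) := by
        have hl := Derivation.leibniz_pow (d⁄dX ℚ) (a := E1 - 1) (i + 1)
        rw [Nat.add_sub_cancel, deriv_h] at hl
        rw [hl, smul_eq_mul]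
      have key : coeff (R := ℚ) (n + 1) ((E1 - 1) ^ (i + 1)) * ((n : ℚ) + 1) =
          ((i : ℚ) + 1) * (coeff (R := ℚ) n ((E1 - 1) ^ (i + 1)) + coeff (R := ℚ) n ((E1 - 1) ^ i)) := by
        have hsplit : (E1 - 1) ^ i * E1 = (E1 - 1) ^ (i + 1) + (E1 - 1) ^ i := by ring
        calc coeff (R := ℚ) (n + 1) ((E1 - 1) ^ (i + 1)) * ((n : ℚ) + 1)
            = coeff (R := ℚ) n (d⁄dX ℚ ((E1 - 1) ^ (i + 1))) := (coeff_derivative _ n).symm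
          _ = ((i : ℚ) + 1) * coeff (R := ℚ) n ((E1 - 1) ^ i * E1) := by
              rw [hD, map_nsmul, nsmul_eq_mul, Nat.cast_add, Nat.cast_one]
          _ = ((i : ℚ) + 1) * (coeff (R := ℚ) n ((E1 - 1) ^ (i + 1)) + coeff (R := ℚ) n ((E1 - 1) ^ i)) := by
              rw [hsplit, map_add]
      have hs : (stirling2 (n + 1) (i + 1) : ℚ) =
          ((i : ℚ) + 1) * (stirling2 n (i + 1) : ℚ) + (stirling2 n i : ℚ) := by
        have : stirling2 (n + 1) (i + 1) = (i + 1) * stirling2 n (i + 1) + stirling2 n i := rfl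
        rw [this]
        push_cast
        ring
      calc ((n + 1).factorial : ℚ) * coeff (R := ℚ) (n + 1) ((E1 - 1) ^ (i + 1))
          = (n.factorial : ℚ) * (coeff (R := ℚ) (n + 1) ((E1 - 1) ^ (i + 1)) * ((n : ℚ) + 1)) := by
            rw [Nat.factorial_succ]; push_cast; ring
        _ = (n.factorial : ℚ) * (((i : ℚ) + 1) *
              (coeff (R := ℚ) n ((E1 - 1) ^ (i + 1)) + coeff (R := ℚ) n ((E1 - 1) ^ i))) := by rw [key]
        _ = ((i : ℚ) + 1) * ((n.factorial : ℚ) * coeff (R := ℚ) n ((E1 - 1) ^ (i + 1))) +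
              ((i : ℚ) + 1) * ((n.factorial : ℚ) * coeff (R := ℚ) n ((E1 - 1) ^ i)) := by ring
        _ = ((i : ℚ) + 1) * (((i + 1).factorial : ℚ) * (stirling2 n (i + 1) : ℚ)) +
              ((i : ℚ) + 1) * ((i.factorial : ℚ) * (stirling2 n i : ℚ)) := by
            rw [ih (i + 1), ih i]
        _ = ((i + 1).factorial : ℚ) * (stirling2 (n + 1) (i + 1) : ℚ) := by
            rw [hs, Nat.factorial_succ]
            push_cast
            ring

lemma C2_eq : (C (R := ℚ) 2 : PowerSeries ℚ) = 2 := map_ofNat (C (R := ℚ)) 2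

lemma c1_eq : (2 : PowerSeries ℚ) * C (R := ℚ) (1 / 2) = 1 := by
  rw [← C2_eq, ← map_mul]
  norm_num

lemma c3_eq : (C (R := ℚ) (3 / 2) : PowerSeries ℚ) = 2 - C (R := ℚ) (1 / 2) := by
  have : (3 / 2 : ℚ) = 2 - 1 / 2 := by norm_num
  rw [this, map_sub, C2_eq]

lemma g_eq : C (R := ℚ) (1 / 2) * expComp (C (R := ℚ) 2 * X) + expComp X - C (R := ℚ) (3 / 2) =
    C (R := ℚ) 2 * (E1 - 1) + C (R := ℚ) (1 / 2) * (E1 - 1) ^ 2 := by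
  rw [expComp_CX, expComp_X, ← E1_sq, C2_eq, c3_eq]
  linear_combination E1 * c1_eq

lemma constantCoeff_g : constantCoeff (R := ℚ) (C (R := ℚ) 2 * (E1 - 1) + C (R := ℚ) (1 / 2) * (E1 - 1) ^ 2) = 0 := by
  simp [map_add, map_mul, map_pow, constantCoeff_h]

lemma deriv_C_mul (r : ℚ) (f : PowerSeries ℚ) : d⁄dX ℚ (C (R := ℚ) r * f) = C (R := ℚ) r * d⁄dX ℚ f := by
  rw [Derivation.leibniz, smul_eq_mul, smul_eq_mul, derivative_C, mul_zero, add_zero]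

lemma deriv_g : d⁄dX ℚ (C (R := ℚ) 2 * (E1 - 1) + C (R := ℚ) (1 / 2) * (E1 - 1) ^ 2) = E1 * E1 + E1 := by
  have hl := Derivation.leibniz_pow (d⁄dX ℚ) (a := E1 - 1) 2
  rw [deriv_h, smul_eq_mul] at hl
  rw [map_add, deriv_C_mul, deriv_C_mul, hl, deriv_h, nsmul_eq_mul, C2_eq]
  push_cast
  linear_combination ((E1 - 1) ^ (2 - 1) * E1) * c1_eq

lemma constantCoeff_pcomp (c : ℕ → ℚ) (h : PowerSeries ℚ) :
    constantCoeff (R := ℚ) (pcomp c h) = c 0 := by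
  have h0 := coeff_pcomp c h 0
  simpa using h0

lemma fact_cancel (k : ℕ) : ((k : ℚ) + 1) * (((k + 1).factorial : ℚ))⁻¹ =
    ((k.factorial : ℚ))⁻¹ := by
  have h1 : ((k.factorial : ℚ)) ≠ 0 := Nat.cast_ne_zero.mpr (Nat.factorial_ne_zero _)
  have h2 : ((k : ℚ) + 1) ≠ 0 := by positivity
  rw [Nat.factorial_succ]
  push_cast
  field_simp

lemma deriv_expComp_g :
    d⁄dX ℚ (expComp (C (R := ℚ) 2 * (E1 - 1) + C (R := ℚ) (1 / 2) * (E1 - 1) ^ 2)) =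
      (E1 * E1 + E1) * expComp (C (R := ℚ) 2 * (E1 - 1) + C (R := ℚ) (1 / 2) * (E1 - 1) ^ 2) := by
  rw [expComp_eq_pcomp, derivative_pcomp _ _ constantCoeff_g, deriv_g,
    pcomp_congr _ (fun k => fact_cancel k)]
  rw [mul_comm]

noncomputable def F1 : PowerSeries ℚ := pcomp (fun k => (aseq k : ℚ) / (k.factorial : ℚ)) (E1 - 1)

lemma swap_sum (n : ℕ) :
    ∑ m ∈ Finset.range (n + 1), (∑ i ∈ Finset.Icc m n, stirling2 n i * Nat.choose i m) * cd m
      = ∑ k ∈ Finset.range (n + 1), stirling2 n k * aseq k := by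
  have h1 : ∑ m ∈ Finset.range (n + 1),
      (∑ i ∈ Finset.Icc m n, stirling2 n i * Nat.choose i m) * cd m =
      ∑ m ∈ Finset.range (n + 1), ∑ i ∈ Finset.Icc m n,
        stirling2 n i * Nat.choose i m * cd m :=
    Finset.sum_congr rfl fun m _ => Finset.sum_mul _ _ _
  rw [h1]
  rw [Finset.sum_comm' (s := Finset.range (n + 1)) (t := fun m => Finset.Icc m n)
    (t' := Finset.range (n + 1)) (s' := fun i => Finset.range (i + 1))
    (fun m i => by
      simp only [Finset.mem_range, Finset.mem_Icc]
      omega)]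
  refine Finset.sum_congr rfl fun k _ => ?_
  rw [aseq, Finset.mul_sum]
  exact Finset.sum_congr rfl fun m _ => by ring

lemma lhs_eq_F1 : PowerSeries.mk (fun n =>
      (∑ m ∈ Finset.range (n + 1),
        ((∑ i ∈ Finset.Icc m n, stirling2 n i * Nat.choose i m : ℕ) : ℚ) * (cd m : ℚ)) /
        (n.factorial : ℚ)) = F1 := by
  ext n
  rw [coeff_mk, F1, coeff_pcomp]
  have hn : ((n.factorial : ℚ)) ≠ 0 := Nat.cast_ne_zero.mpr (Nat.factorial_ne_zero _)
  have hterm : ∀ k ∈ Finset.range (n + 1),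
      (aseq k : ℚ) / (k.factorial : ℚ) * coeff (R := ℚ) n ((E1 - 1) ^ k) =
        ((stirling2 n k * aseq k : ℕ) : ℚ) / (n.factorial : ℚ) := by
    intro k _
    have hk : ((k.factorial : ℚ)) ≠ 0 := Nat.cast_ne_zero.mpr (Nat.factorial_ne_zero _)
    have hc := coeff_h_pow n k
    have hcoeff : coeff (R := ℚ) n ((E1 - 1) ^ k) =
        (k.factorial : ℚ) * (stirling2 n k : ℚ) / (n.factorial : ℚ) := by
      field_simp
      linarith [hc]
    rw [hcoeff]
    push_cast
    field_simp
  rw [Finset.sum_congr rfl hterm, ← Finset.sum_div]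
  rw [← Nat.cast_sum, ← swap_sum n]
  push_cast
  ring

lemma aseq_one : aseq 1 = 2 := by
  have := aseq_rec 0
  simp [aseq_zero] at this
  omega

lemma step2 (k : ℕ) : (aseq (k + 1) : ℚ) / (k.factorial : ℚ) =
    2 * ((aseq k : ℚ) / (k.factorial : ℚ)) +
      (if k = 0 then 0 else (aseq (k - 1) : ℚ) / (((k - 1).factorial : ℚ))) := by
  cases k with
  | zero => simp [aseq_one, aseq_zero]
  | succ j =>
    rw [if_neg (Nat.succ_ne_zero j), Nat.add_sub_cancel]
    have hrec := aseq_rec (j + 1)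
    rw [Nat.add_sub_cancel] at hrec
    have hq : (aseq (j + 2) : ℚ) = 2 * (aseq (j + 1) : ℚ) + ((j : ℚ) + 1) * (aseq j : ℚ) := by
      exact_mod_cast congrArg (Nat.cast : ℕ → ℚ) hrec
    have h1 : ((j.factorial : ℚ)) ≠ 0 := Nat.cast_ne_zero.mpr (Nat.factorial_ne_zero _)
    have h2 : (((j + 1).factorial : ℚ)) ≠ 0 := Nat.cast_ne_zero.mpr (Nat.factorial_ne_zero _)
    have hfs : (((j + 1).factorial : ℚ)) = ((j : ℚ) + 1) * (j.factorial : ℚ) := by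
      rw [Nat.factorial_succ]; push_cast; ring
    rw [hq, hfs]
    have h3 : ((j : ℚ) + 1) ≠ 0 := by positivity
    field_simp

lemma deriv_F1 : d⁄dX ℚ F1 = (E1 * E1 + E1) * F1 := by
  rw [F1, derivative_pcomp _ _ constantCoeff_h, deriv_h]
  have e1 : pcomp (fun k => ((k : ℚ) + 1) * ((aseq (k + 1) : ℚ) / ((k + 1).factorial : ℚ)))
      (E1 - 1) = pcomp (fun k => (aseq (k + 1) : ℚ) / (k.factorial : ℚ)) (E1 - 1) := by
    refine pcomp_congr _ fun k => ?_
    rw [div_eq_mul_inv, div_eq_mul_inv, ← mul_assoc, mul_comm ((k : ℚ) + 1), mul_assoc,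
      fact_cancel]
  have e2 : pcomp (fun k => (aseq (k + 1) : ℚ) / (k.factorial : ℚ)) (E1 - 1) =
      C (R := ℚ) 2 * pcomp (fun k => (aseq k : ℚ) / (k.factorial : ℚ)) (E1 - 1) +
        (E1 - 1) * pcomp (fun k => (aseq k : ℚ) / (k.factorial : ℚ)) (E1 - 1) := by
    rw [← pcomp_smul, ← mul_pcomp _ _ constantCoeff_h, ← pcomp_add]
    exact pcomp_congr _ fun k => step2 k
  rw [e1, e2, ← F1, C2_eq]
  ring

/-- For the partition category (the `k = 1` case, OEIS A002872):
`∑_n (∑_{m=0}^{n} (∑_{i=m}^{n} S(n,i)C(i,m)) · cd(m)) xⁿ/n!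
  = exp((1/2)·exp(2x) + exp(x) - 3/2)`. -/
theorem partition_category_egf :
    PowerSeries.mk (fun n =>
        (∑ m ∈ Finset.range (n + 1),
          ((∑ i ∈ Finset.Icc m n, stirling2 n i * Nat.choose i m : ℕ) : ℚ) * (cd m : ℚ)) /
          (n.factorial : ℚ)) =
      expComp (PowerSeries.C (R := ℚ) (1 / 2) * expComp (PowerSeries.C (R := ℚ) 2 * PowerSeries.X) +
        expComp PowerSeries.X - PowerSeries.C (R := ℚ) (3 / 2)) := by
  rw [g_eq, lhs_eq_F1]
  refine ode_unique deriv_F1 deriv_expComp_g ?_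
  rw [F1, expComp_eq_pcomp, constantCoeff_pcomp, constantCoeff_pcomp]
  simp [aseq_zero]
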